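/- The common product of sin(ωx) and cos(ωx) over one full period [0, T], with ω = 2π/T, is zero: ∫₀ᵀ mproduct(sin(ωx), cos(ωx)) dx = 0. -/

import Mathlib

noncomputable def msign (a : ℝ) : ℝ := if 0 ≤ a then 1 else -1

noncomputable def mproduct (a b : ℝ) : ℝ :=
  msign a * msign b * min (msign a * a) (msign b * b)

lemma msign_neg {a : ℝ} (ha : a ≠ 0) : msign (-a) = -msign a := by
  rcases ha.lt_or_gt with h | h
  · simp [msign, h.le, not_le.2 h, le_of_lt (neg_pos.2 h)]
  · simp [msign, h.le, not_le.2 (neg_neg_iff_pos.2 h)]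

lemma mproduct_neg_left {a : ℝ} (ha : a ≠ 0) (b : ℝ) :
    mproduct (-a) b = -mproduct a b := by
  unfold mproduct
  rw [msign_neg ha]
  ring_nf

open Real MeasureTheory in
theorem common_product_sin_cos (T : ℝ) (hT : 0 < T) (ω : ℝ) (hω : ω = 2 * π / T) :
    (∫ x in (0:ℝ)..T, mproduct (sin (ω * x)) (cos (ω * x))) = 0 := by
  have hπ := Real.pi_pos
  have hT0 : T ≠ 0 := ne_of_gt hT
  have hωT : ω * T = 2 * π := by rw [hω]; field_simp
  have hω0 : ω ≠ 0 := by
    rw [hω]; positivity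
  set f : ℝ → ℝ := fun x => mproduct (sin (ω * x)) (cos (ω * x)) with hf
  have key : (∫ x in (0:ℝ)..T, f x) = ∫ x in (0:ℝ)..T, f (T - x) := by
    rw [intervalIntegral.integral_comp_sub_left f T]
    simp
  have hnull : ∀ᵐ x : ℝ, Real.sin (ω * x) ≠ 0 := by
    rw [ae_iff]
    push_neg
    refine measure_mono_null (fun x hx => ?_)
      ((Set.countable_range fun n : ℤ => (n : ℝ) * π / ω).measure_zero _)
    simp only [Set.mem_setOf_eq, not_not] at hx
    rw [Real.sin_eq_zero_iff] at hx
    obtain ⟨n, hn⟩ := hx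
    exact ⟨n, by field_simp [hn]; exact hn⟩
  have h2 : (∫ x in (0:ℝ)..T, f (T - x)) = ∫ x in (0:ℝ)..T, -f x := by
    apply intervalIntegral.integral_congr_ae
    filter_upwards [hnull] with x hx _
    have hs : Real.sin (ω * (T - x)) = -Real.sin (ω * x) := by
      have : ω * (T - x) = 2 * π - ω * x := by rw [mul_sub, hωT]
      rw [this, Real.sin_sub]
      simp [Real.sin_two_pi, Real.cos_two_pi]
    have hc : Real.cos (ω * (T - x)) = Real.cos (ω * x) := by
      have : ω * (T - x) = 2 * π - ω * x := by rw [mul_sub, hωT]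
      rw [this, Real.cos_sub]
      simp [Real.sin_two_pi, Real.cos_two_pi]
    show mproduct (Real.sin (ω * (T - x))) (Real.cos (ω * (T - x))) = -f x
    rw [hs, hc, mproduct_neg_left hx]
  have hI : (∫ x in (0:ℝ)..T, f x) = - ∫ x in (0:ℝ)..T, f x := by
    conv_lhs => rw [key, h2]
    exact intervalIntegral.integral_neg
  have : (∫ x in (0:ℝ)..T, f x) = 0 := by linarith
  simpa [hf] using this
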